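/- arXiv:1002.4533 — 3 statements merged into one kernel-verified Lean document; each statement's English description precedes it below -/
import Mathlib

section
/- Let f(x; θ) = exp(θ b(x) − A(θ)) be a one-parameter exponential family and q > 0 with θ₀/q in the natural parameter space. Then the surrogate parameter θ* solving E_{θ₀}[U(X;θ*) f(X;θ*)^{1−q}] = 0, where U(x;θ) = b(x) − A'(θ), is given by θ* = θ₀/q. -/
open MeasureTheory

/-- For a one-parameter exponential family `f(x;θ) = exp(θ b(x) − A(θ))`, the
surrogate parameter solving `E_{θ₀}[U(X;θ*) f(X;θ*)^(1−q)] = 0` (with score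
`U(x;θ) = b(x) − A'(θ)`) is `θ* = θ₀ / q`. -/
theorem stmt4 {Ω : Type*} [MeasurableSpace Ω] (μ : Measure Ω)
    (b : Ω → ℝ) (θ₀ q : ℝ) (hq : 0 < q)
    (A : ℝ → ℝ) (hA : ∀ η, A η = Real.log (∫ x, Real.exp (η * b x) ∂μ))
    (hpos : ∀ η, 0 < ∫ x, Real.exp (η * b x) ∂μ)
    (hbint : Integrable (fun x => b x * Real.exp ((θ₀ / q) * b x)) μ)
    (hderiv : HasDerivAt (fun η => ∫ x, Real.exp (η * b x) ∂μ)
      (∫ x, b x * Real.exp ((θ₀ / q) * b x) ∂μ) (θ₀ / q))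
    (hAderiv : DifferentiableAt ℝ A (θ₀ / q))
    (hint : Integrable (fun x => (b x - deriv A (θ₀ / q)) *
      Real.exp (θ₀ * b x - A θ₀) *
      Real.exp ((θ₀ / q) * b x - A (θ₀ / q)) ^ (1 - q)) μ) :
    ∫ x, (b x - deriv A (θ₀ / q)) * Real.exp (θ₀ * b x - A θ₀) *
      Real.exp ((θ₀ / q) * b x - A (θ₀ / q)) ^ (1 - q) ∂μ = 0 := by
  set t := θ₀ / q with ht
  set Z : ℝ → ℝ := fun η => ∫ x, Real.exp (η * b x) ∂μ with hZ
  set Z' : ℝ := ∫ x, b x * Real.exp (t * b x) ∂μ with hZ'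
  -- deriv A t = Z' / Z t
  have hAfun : A = fun η => Real.log (Z η) := funext hA
  have hlog : HasDerivAt (fun η => Real.log (Z η)) (Z' / Z t) t :=
    hderiv.log (ne_of_gt (hpos t))
  have hdA : deriv A t = Z' / Z t := by
    rw [hAfun]; exact hlog.deriv
  -- integrability of exp(t * b ·)
  have hexpint : Integrable (fun x => Real.exp (t * b x)) μ := by
    by_contra h
    have h0 := hpos t
    rw [show (∫ x, Real.exp (t * b x) ∂μ) = 0 from integral_undef h] at h0
    exact lt_irrefl 0 h0
  -- rewrite the integrand
  set K : ℝ := Real.exp (-(A θ₀) + (1 - q) * (- A t)) with hK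
  have key : ∀ x, (b x - deriv A t) * Real.exp (θ₀ * b x - A θ₀) *
      Real.exp (t * b x - A t) ^ (1 - q)
      = (b x * Real.exp (t * b x) - deriv A t * Real.exp (t * b x)) * K := by
    intro x
    have hθ : θ₀ = q * t := by rw [ht]; field_simp
    rw [← Real.exp_mul, ← sub_mul, hK, mul_assoc, mul_assoc, ← Real.exp_add,
      ← Real.exp_add]
    congr 2
    rw [hθ]; ring
  calc ∫ x, (b x - deriv A t) * Real.exp (θ₀ * b x - A θ₀) *
        Real.exp (t * b x - A t) ^ (1 - q) ∂μ
      = ∫ x, (b x * Real.exp (t * b x) - deriv A t * Real.exp (t * b x)) * K ∂μ := by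
        exact integral_congr_ae (Filter.Eventually.of_forall fun x => key x)
    _ = (∫ x, b x * Real.exp (t * b x) - deriv A t * Real.exp (t * b x) ∂μ) * K :=
        integral_mul_const K _
    _ = (Z' - deriv A t * Z t) * K := by
        rw [integral_sub hbint (hexpint.const_mul _), integral_const_mul]
    _ = 0 := by
        rw [hdA, div_mul_cancel₀ _ (ne_of_gt (hpos t)), sub_self, zero_mul]
end

section
/- For the exponential distribution family f(x; λ) = λ e^{−λx} on (0,∞), the asymptotic variance of the MLqE of λ₀ equals σ² = (λ₀/q)² (q² − 2q + 2)/(q³(2 − q)³) for 0 < q < 2, and σ² → λ₀² as q → 1. -/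
open MeasureTheory Real

open Set

lemma exp_rpow' (a p : ℝ) : (Real.exp a) ^ p = Real.exp (a * p) := by
  rw [Real.rpow_def_of_pos (Real.exp_pos a), Real.log_exp]

lemma mom_int (n : ℕ) {a : ℝ} (ha : 0 < a) :
    IntegrableOn (fun x : ℝ => x ^ n * Real.exp (-a * x)) (Set.Ioi 0) := by
  have h := integrableOn_rpow_mul_exp_neg_mul_rpow
    (show (-1:ℝ) < n from lt_of_lt_of_le (by norm_num) (Nat.cast_nonneg n)) (show (0:ℝ) < 1 by norm_num) ha
  refine h.congr_fun (fun x hx => ?_) measurableSet_Ioi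
  beta_reduce
  rw [Real.rpow_one, Real.rpow_natCast]

lemma mom_eq (n : ℕ) {a : ℝ} (ha : 0 < a) :
    ∫ x in Set.Ioi (0:ℝ), x ^ n * Real.exp (-a * x) = n.factorial / a ^ (n+1) := by
  have h := Real.integral_rpow_mul_exp_neg_mul_Ioi
    (show (0:ℝ) < (n:ℝ) + 1 by positivity) ha
  have e : ∀ x ∈ Set.Ioi (0:ℝ),
      x ^ n * Real.exp (-a * x) = x ^ ((n:ℝ) + 1 - 1) * Real.exp (-(a * x)) := by
    intro x hx
    rw [add_sub_cancel_right, Real.rpow_natCast, neg_mul]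
  rw [setIntegral_congr_fun measurableSet_Ioi e, h, Real.Gamma_nat_eq_factorial,
    show ((n:ℝ) + 1) = ((n+1 : ℕ) : ℝ) by push_cast; ring, Real.rpow_natCast]
  rw [div_pow, one_pow]
  field_simp

lemma quad_int {a : ℝ} (ha : 0 < a) (m : ℝ) :
    IntegrableOn (fun x : ℝ => (m - x)^2 * Real.exp (-a * x)) (Set.Ioi 0) := by
  have e : (fun x : ℝ => (m - x)^2 * Real.exp (-a * x))
      = fun x : ℝ => m^2 * (x^0 * Real.exp (-a*x)) + (-(2*m)) * (x^1 * Real.exp (-a*x))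
          + x^2 * Real.exp (-a*x) := by
    funext x; ring
  rw [e]
  exact (((mom_int 0 ha).const_mul _).add ((mom_int 1 ha).const_mul _)).add (mom_int 2 ha)

lemma quad_eq {a : ℝ} (ha : 0 < a) (m : ℝ) :
    ∫ x in Set.Ioi (0:ℝ), (m - x)^2 * Real.exp (-a * x)
      = m^2/a - 2*m/a^2 + 2/a^3 := by
  have e : ∀ x ∈ Set.Ioi (0:ℝ), (m - x)^2 * Real.exp (-a * x)
      = m^2 * (x^0 * Real.exp (-a*x)) + (-(2*m)) * (x^1 * Real.exp (-a*x))
          + x^2 * Real.exp (-a*x) := by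
    intro x _; ring
  have h0 : Integrable (fun x : ℝ => m^2 * (x^0 * Real.exp (-a*x)))
      (volume.restrict (Set.Ioi 0)) := (mom_int 0 ha).const_mul _
  have h1 : Integrable (fun x : ℝ => (-(2*m)) * (x^1 * Real.exp (-a*x)))
      (volume.restrict (Set.Ioi 0)) := (mom_int 1 ha).const_mul _
  have h01 : Integrable (fun x : ℝ => m^2 * (x^0 * Real.exp (-a*x))
      + (-(2*m)) * (x^1 * Real.exp (-a*x))) (volume.restrict (Set.Ioi 0)) := h0.add h1
  rw [setIntegral_congr_fun measurableSet_Ioi e,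
    integral_add h01 (mom_int 2 ha), integral_add h0 h1,
    integral_const_mul, integral_const_mul, mom_eq 0 ha, mom_eq 1 ha, mom_eq 2 ha]
  norm_num [Nat.factorial]
  field_simp
  ring

lemma exp_int' {a : ℝ} (ha : 0 < a) :
    IntegrableOn (fun x : ℝ => Real.exp (-a * x)) (Set.Ioi 0) :=
  exp_neg_integrableOn_Ioi 0 ha

lemma exp_eq' {a : ℝ} (ha : 0 < a) :
    ∫ x in Set.Ioi (0:ℝ), Real.exp (-a * x) = 1/a := by
  have := mom_eq 0 ha
  simpa using this

lemma alg_aux (c q u : ℝ) (hc : c ≠ 0) (hq : q ≠ 0) (h2q : (2:ℝ) - q ≠ 0) (hu : u ≠ 0) :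
    ((c*u)^2 * (q*c) * ((1/c)^2/(c*(2-q)) - 2*(1/c)/(c*(2-q))^2 + 2/(c*(2-q))^3)) /
      ((q*c) * (1-q) * c * u * ((1/c)^2/c - 2*(1/c)/c^2 + 2/c^3)
        + -((q*c) * (c*u)) * (c^2)⁻¹ * (1/c))^2
      = c^2 * ((q^2 - 2*q + 2)/(q^3*(2-q)^3)) := by
  have hJ : (q*c) * (1-q) * c * u * ((1/c)^2/c - 2*(1/c)/c^2 + 2/c^3)
        + -((q*c) * (c*u)) * (c^2)⁻¹ * (1/c) = -(q^2*u)/c := by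
    field_simp
    ring
  rw [hJ]
  rw [div_eq_iff (pow_ne_zero 2 (div_ne_zero (neg_ne_zero.mpr
    (mul_ne_zero (pow_ne_zero 2 hq) hu)) hc))]
  field_simp
  ring

/-- For the exponential family `f(x;λ) = λ e^{−λx}` on `(0,∞)`, the asymptotic
variance `V = K / J²` of the MLqE of `λ₀` (with surrogate `λ* = λ₀/q`,
`U*(x;λ,q) = (1/λ − x)(λ e^{−λx})^(1−q)`) equals
`(λ₀/q)² (q² − 2q + 2)/(q³(2−q)³)` for `0 < q < 2`, and this expression tends to
`λ₀²` as `q → 1`. -/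
theorem stmt6 (lam0 q : ℝ) (h0 : 0 < q) (h2 : q < 2) (hq1 : q ≠ 1) (hl : 0 < lam0) :
    (∫ x in Set.Ioi (0 : ℝ),
        ((1 / (lam0 / q) - x) * ((lam0 / q) * Real.exp (-(lam0 / q) * x)) ^ (1 - q)) ^ 2 *
          (lam0 * Real.exp (-lam0 * x))) /
      (∫ x in Set.Ioi (0 : ℝ),
        deriv (fun l : ℝ => (1 / l - x) * (l * Real.exp (-l * x)) ^ (1 - q)) (lam0 / q) *
          (lam0 * Real.exp (-lam0 * x))) ^ 2
      = (lam0 / q) ^ 2 * ((q ^ 2 - 2 * q + 2) / (q ^ 3 * (2 - q) ^ 3)) ∧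
    Filter.Tendsto
      (fun s : ℝ => (lam0 / s) ^ 2 * ((s ^ 2 - 2 * s + 2) / (s ^ 3 * (2 - s) ^ 3)))
      (nhds 1) (nhds (lam0 ^ 2)) := by
  constructor
  · set c : ℝ := lam0 / q with hcdef
    have hc : 0 < c := div_pos hl h0
    have hq2 : (0:ℝ) < 2 - q := by linarith
    have hl0 : lam0 = q * c := by rw [hcdef]; field_simp
    set t : ℝ := c ^ ((1:ℝ) - q) with htdef
    set u : ℝ := c ^ (-q : ℝ) with hudef
    have ht : 0 < t := Real.rpow_pos_of_pos hc _
    have hu : 0 < u := Real.rpow_pos_of_pos hc _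
    have htu : t = c * u := by
      rw [htdef, hudef, show (1:ℝ) - q = 1 + (-q) by ring, Real.rpow_add hc, Real.rpow_one]
    have hbase : ∀ x : ℝ, (c * Real.exp (-c * x)) ^ (1 - q)
        = t * Real.exp ((-c * x) * (1 - q)) := by
      intro x
      rw [Real.mul_rpow hc.le (Real.exp_pos _).le, exp_rpow']
    have hbase2 : ∀ x : ℝ, (c * Real.exp (-c * x)) ^ (1 - q - 1)
        = u * Real.exp ((-c * x) * (-q)) := by
      intro x
      rw [show (1:ℝ) - q - 1 = -q by ring, Real.mul_rpow hc.le (Real.exp_pos _).le, exp_rpow']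
    have ha : 0 < c * (2 - q) := mul_pos hc hq2
    -- K
    have hKpt : ∀ x ∈ Set.Ioi (0:ℝ),
        ((1 / c - x) * (c * Real.exp (-c * x)) ^ (1 - q)) ^ 2 * (lam0 * Real.exp (-lam0 * x))
          = (t ^ 2 * lam0) * ((1 / c - x) ^ 2 * Real.exp (-(c * (2 - q)) * x)) := by
      intro x _
      rw [hbase x]
      have e1 : ((1 / c - x) * (t * Real.exp ((-c * x) * (1 - q)))) ^ 2
            * (lam0 * Real.exp (-lam0 * x))
          = (t ^ 2 * lam0) * ((1 / c - x) ^ 2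
            * (Real.exp ((-c * x) * (1 - q)) * Real.exp ((-c * x) * (1 - q))
              * Real.exp (-lam0 * x))) := by ring
      rw [e1, ← Real.exp_add, ← Real.exp_add]
      congr 2
      rw [hl0]; ring
    have hK : (∫ x in Set.Ioi (0:ℝ),
        ((1 / c - x) * (c * Real.exp (-c * x)) ^ (1 - q)) ^ 2 * (lam0 * Real.exp (-lam0 * x)))
        = (t ^ 2 * lam0) * ((1/c)^2/(c*(2-q)) - 2*(1/c)/(c*(2-q))^2 + 2/(c*(2-q))^3) := by
      rw [setIntegral_congr_fun measurableSet_Ioi hKpt, integral_const_mul, quad_eq ha (1/c)]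
    -- deriv
    have hderiv : ∀ x : ℝ,
        deriv (fun l : ℝ => (1 / l - x) * (l * Real.exp (-l * x)) ^ (1 - q)) c
          = -(c^2)⁻¹ * (c * Real.exp (-c * x)) ^ (1 - q)
            + (1 / c - x) * ((1 * Real.exp (-c * x) + c * (Real.exp (-c * x) * (-1 * x)))
              * (1 - q) * (c * Real.exp (-c * x)) ^ (1 - q - 1)) := by
      intro x
      have hA : HasDerivAt (fun l : ℝ => 1 / l - x) (-(c^2)⁻¹) c := by
        simpa [one_div] using (hasDerivAt_inv hc.ne').sub_const x
      have hexp : HasDerivAt (fun l : ℝ => Real.exp (-l * x))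
          (Real.exp (-c * x) * (-1 * x)) c :=
        (((hasDerivAt_id c).neg).mul_const x).exp
      have hB : HasDerivAt (fun l : ℝ => l * Real.exp (-l * x))
          (1 * Real.exp (-c * x) + c * (Real.exp (-c * x) * (-1 * x))) c :=
        (hasDerivAt_id c).mul hexp
      have hne : c * Real.exp (-c * x) ≠ 0 := by positivity
      have hC := hB.rpow_const (p := 1 - q) (Or.inl hne)
      exact (hA.mul hC).deriv
    -- J pointwise
    have hE1 : ∀ x : ℝ, Real.exp ((-c * x) * (1 - q)) * Real.exp (-lam0 * x)
        = Real.exp (-c * x) := by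
      intro x
      rw [← Real.exp_add]
      congr 1
      rw [hl0]; ring
    have hE2 : ∀ x : ℝ, Real.exp ((-c * x) * (-q)) * Real.exp (-lam0 * x) = 1 := by
      intro x
      rw [← Real.exp_add, hl0, show (-c * x) * (-q) + -(q * c) * x = 0 by ring, Real.exp_zero]
    have hJpt : ∀ x ∈ Set.Ioi (0:ℝ),
        deriv (fun l : ℝ => (1 / l - x) * (l * Real.exp (-l * x)) ^ (1 - q)) c
            * (lam0 * Real.exp (-lam0 * x))
          = (lam0 * (1 - q) * c * u) * ((1 / c - x) ^ 2 * Real.exp (-c * x))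
            + (-(lam0 * t) * (c^2)⁻¹) * Real.exp (-c * x) := by
      intro x _
      rw [hderiv x, hbase x, hbase2 x]
      have e1 : (-(c ^ 2)⁻¹ * (t * Real.exp ((-c * x) * (1 - q)))
            + (1 / c - x) * ((1 * Real.exp (-c * x) + c * (Real.exp (-c * x) * (-1 * x)))
              * (1 - q) * (u * Real.exp ((-c * x) * (-q))))) * (lam0 * Real.exp (-lam0 * x))
          = (-(c ^ 2)⁻¹ * t * lam0) * (Real.exp ((-c * x) * (1 - q)) * Real.exp (-lam0 * x))
            + ((1 / c - x) * (1 - c * x) * (1 - q) * u * lam0)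
              * (Real.exp (-c * x) * (Real.exp ((-c * x) * (-q)) * Real.exp (-lam0 * x))) := by
        ring
      rw [e1, hE1 x, hE2 x]
      have hcx : 1 - c * x = c * (1 / c - x) := by field_simp
      rw [hcx]
      ring
    have hJ : (∫ x in Set.Ioi (0:ℝ),
        deriv (fun l : ℝ => (1 / l - x) * (l * Real.exp (-l * x)) ^ (1 - q)) c
          * (lam0 * Real.exp (-lam0 * x)))
        = (lam0 * (1 - q) * c * u) * ((1/c)^2/c - 2*(1/c)/c^2 + 2/c^3)
          + (-(lam0 * t) * (c^2)⁻¹) * (1/c) := by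
      have hf : Integrable (fun x : ℝ => (lam0 * (1 - q) * c * u)
          * ((1 / c - x) ^ 2 * Real.exp (-c * x))) (volume.restrict (Set.Ioi 0)) :=
        (quad_int hc (1/c)).const_mul _
      have hg : Integrable (fun x : ℝ => (-(lam0 * t) * (c^2)⁻¹) * Real.exp (-c * x))
          (volume.restrict (Set.Ioi 0)) := (exp_int' hc).const_mul _
      rw [setIntegral_congr_fun measurableSet_Ioi hJpt, integral_add hf hg,
        integral_const_mul, integral_const_mul, quad_eq hc (1/c), exp_eq' hc]
    rw [hK, hJ, htu, hl0]
    exact alg_aux c q u hc.ne' h0.ne' hq2.ne' hu.ne'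
  · have hcont : ContinuousAt
        (fun s : ℝ => (lam0 / s) ^ 2 * ((s ^ 2 - 2 * s + 2) / (s ^ 3 * (2 - s) ^ 3))) 1 := by
      apply ContinuousAt.mul
      · exact (continuousAt_const.div continuousAt_id one_ne_zero).pow 2
      · exact ContinuousAt.div (by fun_prop) (by fun_prop) (by norm_num)
    have h := hcont.tendsto
    convert h using 2
    norm_num
end

section
/- Let θ* minimize θ ↦ D(f^{(r)} ∥ f_θ) where f^{(r)} is the escort of the true density and D is Kullback–Leibler divergence, and suppose f_{θ*} = f^{(r)} exactly (the family is closed under escort). Then for q = 1/r, θ* also minimizes the q-entropy H_q(f, f_θ) = −E_f[(f_θ(X)^{1−q} − 1)/(1−q)] over θ, in an exponential family f_θ(x) = exp(θᵀb(x) − A(θ)) assuming differentiation under the integral sign and positive-definiteness of ∇²A. -/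
open MeasureTheory Matrix

lemma aux_line_convex {p : ℕ} (A : (Fin p → ℝ) → ℝ) (hAsmooth : ContDiff ℝ 2 A)
    (hPD : ∀ (θ v : Fin p → ℝ), v ≠ 0 → 0 < iteratedFDeriv ℝ 2 A θ ![v, v])
    (c u : Fin p → ℝ) :
    ConvexOn ℝ Set.univ (fun t : ℝ => A (c + t • u)) := by
  rcases eq_or_ne u 0 with rfl | hu
  · simp only [smul_zero, add_zero]
    exact convexOn_const _ convex_univ
  have hφ : ∀ t : ℝ, HasDerivAt (fun s : ℝ => c + s • u) u t := by
    intro t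
    simpa using ((hasDerivAt_id t).smul_const u).const_add c
  have hd1 : ∀ t : ℝ, HasDerivAt (fun s : ℝ => A (c + s • u))
      (fderiv ℝ A (c + t • u) u) t := by
    intro t
    exact ((hAsmooth.differentiable (by norm_num)) (c + t • u)).hasFDerivAt.comp_hasDerivAt
      t (hφ t)
  have hF : ContDiff ℝ 1 (fderiv ℝ A) := hAsmooth.fderiv_right (by norm_num)
  have hd2 : ∀ t : ℝ, HasDerivAt (fun s : ℝ => fderiv ℝ A (c + s • u) u)
      (fderiv ℝ (fderiv ℝ A) (c + t • u) u u) t := by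
    intro t
    have h1 : HasDerivAt (fun s : ℝ => fderiv ℝ A (c + s • u))
        (fderiv ℝ (fderiv ℝ A) (c + t • u) u) t :=
      ((hF.differentiable (by norm_num)) (c + t • u)).hasFDerivAt.comp_hasDerivAt t (hφ t)
    simpa using h1.clm_apply (hasDerivAt_const t u)
  have hderiv : deriv (fun s : ℝ => A (c + s • u))
      = fun t => fderiv ℝ A (c + t • u) u := funext fun t => (hd1 t).deriv
  apply convexOn_of_deriv2_nonneg convex_univ
  · exact fun t _ => (hd1 t).continuousAt.continuousWithinAt
  · intro t _
    exact (hd1 t).differentiableAt.differentiableWithinAt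
  · rw [interior_univ, hderiv]
    intro t _
    exact (hd2 t).differentiableAt.differentiableWithinAt
  · rw [interior_univ]
    intro t _
    have h2 : deriv^[2] (fun s : ℝ => A (c + s • u)) t
        = fderiv ℝ (fderiv ℝ A) (c + t • u) u u := by
      have : deriv^[2] (fun s : ℝ => A (c + s • u)) t
          = deriv (deriv (fun s : ℝ => A (c + s • u))) t := rfl
      rw [this, hderiv, (hd2 t).deriv]
    rw [h2]
    have h3 := hPD (c + t • u) u hu
    rw [iteratedFDeriv_two_apply] at h3
    simpa using h3.le

/-- In a full-rank exponential family `f_θ(x) = exp(θᵀ b(x) − A(θ))`, the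
parameter `θ** = θ₀/q` (for which `f_{θ**}` is the escort `f_{θ₀}^{(1/q)}`,
the minimizer of `D(f^{(r)} ∥ f_θ)` with `q = 1/r`) also minimizes the
`q`-entropy `H_q(f_{θ₀}, f_θ) = −E_{θ₀}[(f_θ(X)^{1−q} − 1)/(1−q)]`: the
first-order condition `∇_θ H_q = 0` holds at `θ₀/q` and it is a (local)
minimum, assuming smoothness of `A` and positive-definiteness of `∇²A`. -/
theorem stmt19 {Ω : Type*} [MeasurableSpace Ω] (μ : Measure Ω) (p : ℕ)
    (b : Ω → Fin p → ℝ) (θ₀ : Fin p → ℝ) (q r : ℝ)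
    (hr : 0 < r) (hqr : q = 1 / r) (hq1 : q ≠ 1)
    (hint : ∀ θ : Fin p → ℝ, Integrable (fun x => Real.exp (θ ⬝ᵥ b x)) μ)
    (hpos : ∀ θ : Fin p → ℝ, 0 < ∫ x, Real.exp (θ ⬝ᵥ b x) ∂μ)
    (A : (Fin p → ℝ) → ℝ)
    (hA : ∀ θ, A θ = Real.log (∫ x, Real.exp (θ ⬝ᵥ b x) ∂μ))
    (hAsmooth : ContDiff ℝ 2 A)
    (hPD : ∀ (θ : Fin p → ℝ) (v : Fin p → ℝ), v ≠ 0 →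
      0 < iteratedFDeriv ℝ 2 A θ ![v, v])
    (Hq : (Fin p → ℝ) → ℝ)
    (hHq : ∀ θ, Hq θ = -∫ x,
      ((Real.exp (θ ⬝ᵥ b x - A θ)) ^ (1 - q) - 1) / (1 - q) *
        Real.exp (θ₀ ⬝ᵥ b x - A θ₀) ∂μ) :
    fderiv ℝ Hq (q⁻¹ • θ₀) = 0 ∧ IsLocalMin Hq (q⁻¹ • θ₀) := by
  have hq0 : 0 < q := by rw [hqr]; positivity
  have hq1' : (1 : ℝ) - q ≠ 0 := sub_ne_zero.mpr (Ne.symm hq1)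
  set c : Fin p → ℝ := q⁻¹ • θ₀ with hc
  set G : (Fin p → ℝ) → ℝ :=
    fun θ => A ((1 - q) • θ + θ₀) - (1 - q) * A θ - A θ₀ with hGdef
  have hI : ∀ ψ : Fin p → ℝ, ∫ x, Real.exp (ψ ⬝ᵥ b x) ∂μ = Real.exp (A ψ) := by
    intro ψ
    rw [hA ψ, Real.exp_log (hpos ψ)]
  -- pointwise identity
  have hpt : ∀ (θ : Fin p → ℝ) (x : Ω),
      ((Real.exp (θ ⬝ᵥ b x - A θ)) ^ (1 - q) - 1) / (1 - q) *
        Real.exp (θ₀ ⬝ᵥ b x - A θ₀)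
      = (Real.exp (-((1 - q) * A θ) - A θ₀) * Real.exp (((1 - q) • θ + θ₀) ⬝ᵥ b x)
          - Real.exp (-A θ₀) * Real.exp (θ₀ ⬝ᵥ b x)) / (1 - q) := by
    intro θ x
    have e1 : (Real.exp (θ ⬝ᵥ b x - A θ)) ^ (1 - q)
        = Real.exp ((θ ⬝ᵥ b x - A θ) * (1 - q)) := (Real.exp_mul _ _).symm
    have e2 : ((1 - q) • θ + θ₀) ⬝ᵥ b x = (1 - q) * (θ ⬝ᵥ b x) + θ₀ ⬝ᵥ b x := by
      simp [add_dotProduct, smul_dotProduct, smul_eq_mul]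
    rw [e1, e2, div_mul_eq_mul_div, sub_mul, one_mul, ← Real.exp_add,
      ← Real.exp_add, ← Real.exp_add]
    congr 2
    · congr 1
      ring
    · congr 1
      ring
  -- Hq in closed form
  have hHg : ∀ θ, Hq θ = (1 - Real.exp (G θ)) / (1 - q) := by
    intro θ
    rw [hHq θ]
    have h1 : ∫ x, ((Real.exp (θ ⬝ᵥ b x - A θ)) ^ (1 - q) - 1) / (1 - q) *
          Real.exp (θ₀ ⬝ᵥ b x - A θ₀) ∂μ
        = ∫ x, (Real.exp (-((1 - q) * A θ) - A θ₀) *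
            Real.exp (((1 - q) • θ + θ₀) ⬝ᵥ b x)
            - Real.exp (-A θ₀) * Real.exp (θ₀ ⬝ᵥ b x)) / (1 - q) ∂μ :=
      integral_congr_ae (Filter.Eventually.of_forall (hpt θ))
    rw [h1, integral_div, integral_sub ((hint _).const_mul _) ((hint _).const_mul _),
      integral_const_mul, integral_const_mul, hI, hI, ← Real.exp_add, ← Real.exp_add,
      neg_add_cancel, Real.exp_zero]
    rw [← neg_div, neg_sub]
    congr 3
    simp only [hGdef]
    ring
  -- global minimality
  have key : ∀ θ, Hq c ≤ Hq θ := by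
    intro θ
    rcases eq_or_ne θ c with rfl | hne
    · exact le_refl _
    rw [hHg, hHg]
    set u : Fin p → ℝ := θ - c with hu
    set h : ℝ → ℝ := fun t => A (c + t • u) with hhdef
    have hcv : ConvexOn ℝ Set.univ h := aux_line_convex A hAsmooth hPD c u
    have hqc : q • c = θ₀ := by
      rw [hc, smul_smul, mul_inv_cancel₀ (ne_of_gt hq0), one_smul]
    have h0 : h 0 = A c := by simp [hhdef]
    have h1 : h 1 = A θ := by simp [hhdef, hu]
    have hlam : h (1 - q) = A ((1 - q) • θ + θ₀) := by
      have : c + (1 - q) • u = (1 - q) • θ + θ₀ := by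
        rw [hu, ← hqc]
        module
      rw [hhdef]
      simp only [this]
    have hGc : G c = q * A c - A θ₀ := by
      have : (1 - q) • c + θ₀ = c := by
        rw [← hqc]; module
      simp only [hGdef, this]
      ring
    have hGt : G θ = h (1 - q) - (1 - q) * h 1 - A θ₀ := by
      simp only [hGdef, hlam, h1]
    have hGc' : G c = q * h 0 - A θ₀ := by rw [hGc, h0]
    rcases lt_or_gt_of_ne (fun hh : q = 1 => hq1 hh) with hqlt | hqgt
    · -- q < 1, so 1 - q ∈ (0,1)
      have hln : (0:ℝ) < 1 - q := by linarith
      have hle : h (1 - q) ≤ (1 - q) * h 1 + q * h 0 := by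
        have := hcv.2 (Set.mem_univ (1:ℝ)) (Set.mem_univ (0:ℝ))
          (le_of_lt hln) (le_of_lt hq0) (by ring)
        simpa using this
      have hGle : G θ ≤ G c := by linarith [hGt, hGc']
      have hexp : Real.exp (G θ) ≤ Real.exp (G c) := Real.exp_le_exp.mpr hGle
      have heq : (1 - Real.exp (G θ)) / (1 - q) - (1 - Real.exp (G c)) / (1 - q)
          = (Real.exp (G c) - Real.exp (G θ)) / (1 - q) := by ring
      have h9' : (0:ℝ) ≤ (Real.exp (G c) - Real.exp (G θ)) / (1 - q) :=
        div_nonneg (by linarith) (le_of_lt hln)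
      linarith
    · -- q > 1, so 1 - q < 0
      have hln : (1:ℝ) - q < 0 := by linarith
      have hle : h 0 ≤ (1 / q) * h (1 - q) + ((q - 1) / q) * h 1 := by
        have ha : (0:ℝ) ≤ 1 / q := by positivity
        have hb : (0:ℝ) ≤ (q - 1) / q := by apply div_nonneg <;> linarith
        have hab : 1 / q + (q - 1) / q = 1 := by field_simp; ring
        have h2 := hcv.2 (Set.mem_univ ((1:ℝ) - q)) (Set.mem_univ (1:ℝ)) ha hb hab
        have hz : (1 / q) • ((1:ℝ) - q) + ((q - 1) / q) • (1:ℝ) = 0 := by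
          rw [smul_eq_mul, smul_eq_mul]
          field_simp
          ring
        rw [hz] at h2
        simpa using h2
      have hmul := mul_le_mul_of_nonneg_left hle (le_of_lt hq0)
      have hfs : q * (1 / q * h (1 - q) + (q - 1) / q * h 1)
          = h (1 - q) + (q - 1) * h 1 := by
        field_simp
      have hGle : G c ≤ G θ := by
        rw [hfs] at hmul
        linarith [hGt, hGc']
      have hexp : Real.exp (G c) ≤ Real.exp (G θ) := Real.exp_le_exp.mpr hGle
      have h9 : (0:ℝ) ≤ (Real.exp (G c) - Real.exp (G θ)) / (1 - q) :=
        by rw [div_nonneg_iff]; right; constructor <;> linarith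
      have heq : (1 - Real.exp (G θ)) / (1 - q) - (1 - Real.exp (G c)) / (1 - q)
          = (Real.exp (G c) - Real.exp (G θ)) / (1 - q) := by ring
      linarith
  have hmin : IsLocalMin Hq c := Filter.Eventually.of_forall key
  exact ⟨hmin.fderiv_eq_zero, hmin⟩
end
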